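/- For every N ≥ 3, the class of graphs with chromatic number exactly N is not closed under elementary equivalence; more concretely (the key combinatorial fact used): for N ≥ 3 and every n ≥ 1, the graph G_n obtained by joining every vertex of the cycle C_{2n+1} to every vertex of the complete graph K_{N-2} has chromatic number N+1, i.e. G_n is (N+1)-colourable but not N-colourable. -/

import Mathlib

/-- The join of two simple graphs: both graphs side by side, with every vertex
of the first adjacent to every vertex of the second. -/
def SimpleGraph.joinG {α β : Type*} (G : SimpleGraph α) (H : SimpleGraph β) :
    SimpleGraph (α ⊕ β) where
  Adj u v := match u, v with
    | .inl a, .inl b => G.Adj a b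
    | .inr a, .inr b => H.Adj a b
    | _, _ => True
  symm := ⟨by rintro (a | a) (b | b) h <;> first | exact h.symm | trivial⟩
  loopless := ⟨by rintro (a | a) h <;> exact h.ne rfl⟩

open scoped Fin.NatCast Fin.CommRing

/-- Consecutive vertices of the cycle graph are adjacent. -/
lemma cycle_succ_adj (n k : ℕ) (hn : 1 ≤ n) :
    (SimpleGraph.cycleGraph (2 * n + 1)).Adj (k : Fin (2 * n + 1)) ((k + 1 : ℕ)) := by
  rw [SimpleGraph.cycleGraph_adj']
  right
  push_cast
  rw [add_sub_cancel_left]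
  simp [Fin.val_one', Nat.mod_eq_of_lt]
  omega

/-- An odd cycle is not 2-colourable. -/
lemma oddCycle_not_two_colorable (n : ℕ) (hn : 1 ≤ n) :
    ¬ (SimpleGraph.cycleGraph (2 * n + 1)).Colorable 2 := by
  rintro ⟨c⟩
  have key : ∀ k : ℕ, c (k : Fin (2 * n + 1)) = c 0 + (k : Fin 2) := by
    intro k
    induction k with
    | zero => simp
    | succ k ih =>
      have h := (c.valid (cycle_succ_adj n k hn)).symm
      rw [ih] at h
      have hc : ((k + 1 : ℕ) : Fin 2) = (k : Fin 2) + 1 := by push_cast; ring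
      rw [hc, ← add_assoc]
      have h3 : (c 0 + (k:Fin 2) + 1).val = ((c 0 + (k:Fin 2)).val + 1) % 2 := rfl
      have h1 : (c 0 + (k:Fin 2)).val < 2 := Fin.isLt _
      have h2 : (c ((k+1:ℕ) : Fin (2*n+1))).val < 2 := Fin.isLt _
      rw [ne_eq, Fin.ext_iff] at h; rw [Fin.ext_iff]
      omega
  have h0 : ((2 * n + 1 : ℕ) : Fin (2 * n + 1)) = 0 := by simp
  have hkey := key (2 * n + 1)
  rw [h0] at hkey
  have h1 : ((2 * n + 1 : ℕ) : Fin 2) = 1 := by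
    rw [Fin.ext_iff]
    simp [Fin.val_one', Nat.add_mod, Nat.mul_mod]
  rw [h1] at hkey
  simp at hkey

/-- The explicit 3-colouring of the odd cycle separates adjacent vertices. -/
lemma cycle_nat_color_ne (n : ℕ) (hn : 1 ≤ n) (u v : Fin (2*n+1)) (h : u = v + 1) :
    (if u.val = 2*n then 2 else u.val % 2) ≠ (if v.val = 2*n then 2 else v.val % 2) := by
  have hu : u.val = if v = Fin.last (2*n) then 0 else v.val + 1 := by
    rw [h]; exact Fin.val_add_one v
  have hvl : v = Fin.last (2*n) ↔ v.val = 2*n := by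
    rw [Fin.ext_iff, Fin.val_last]
  have hv : v.val < 2*n+1 := v.isLt
  split_ifs at hu ⊢ <;> omega

lemma cycle_adj_cases (n : ℕ) (hn : 1 ≤ n) {u v : Fin (2*n+1)}
    (h : (SimpleGraph.cycleGraph (2*n+1)).Adj u v) : u = v + 1 ∨ v = u + 1 := by
  rw [SimpleGraph.cycleGraph_adj'] at h
  have h1 : (1 : Fin (2*n+1)).val = 1 := by
    simp [Fin.val_one', Nat.mod_eq_of_lt]; omega
  rcases h with h | h
  · left
    have : u - v = 1 := by rw [Fin.ext_iff, h1]; exact h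
    rw [← this]; ring
  · right
    have : v - u = 1 := by rw [Fin.ext_iff, h1]; exact h
    rw [← this]; ring

/-- The explicit `(N+1)`-colouring of the join, as a function to `ℕ`. -/
def joinColorFun (N n : ℕ) : Fin (2*n+1) ⊕ Fin (N-2) → ℕ :=
  Sum.elim (fun v => if v.val = 2*n then 2 else v.val % 2) (fun b => b.val + 3)

lemma joinColorFun_lt (N n : ℕ) (hN : 3 ≤ N) (x : Fin (2*n+1) ⊕ Fin (N-2)) :
    joinColorFun N n x < N + 1 := by
  rcases x with v | b
  · simp only [joinColorFun, Sum.elim_inl]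
    split_ifs <;> omega
  · simp only [joinColorFun, Sum.elim_inr]
    have := b.isLt
    omega

lemma joinColorFun_valid (N n : ℕ) (hN : 3 ≤ N) (hn : 1 ≤ n)
    {x y : Fin (2*n+1) ⊕ Fin (N-2)}
    (h : ((SimpleGraph.cycleGraph (2 * n + 1)).joinG
        (SimpleGraph.completeGraph (Fin (N - 2)))).Adj x y) :
    joinColorFun N n x ≠ joinColorFun N n y := by
  rcases x with u | u <;> rcases y with v | v <;>
    simp only [joinColorFun, Sum.elim_inl, Sum.elim_inr]
  · rcases cycle_adj_cases n hn h with h' | h'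
    · exact cycle_nat_color_ne n hn u v h'
    · exact (cycle_nat_color_ne n hn v u h').symm
  · split_ifs <;> omega
  · split_ifs <;> omega
  · have huv : u ≠ v := h
    rw [ne_eq, Fin.ext_iff] at huv
    omega

lemma join_colorable (N n : ℕ) (hN : 3 ≤ N) (hn : 1 ≤ n) :
    ((SimpleGraph.cycleGraph (2 * n + 1)).joinG
        (SimpleGraph.completeGraph (Fin (N - 2)))).Colorable (N + 1) :=
  ⟨SimpleGraph.Coloring.mk
    (fun x => ⟨joinColorFun N n x, joinColorFun_lt N n hN x⟩)
    (fun h => by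
      simp only [ne_eq, Fin.mk.injEq]
      exact joinColorFun_valid N n hN hn h)⟩

lemma join_not_colorable (N n : ℕ) (hN : 3 ≤ N) (hn : 1 ≤ n) :
    ¬ ((SimpleGraph.cycleGraph (2 * n + 1)).joinG
        (SimpleGraph.completeGraph (Fin (N - 2)))).Colorable N := by
  rintro ⟨c⟩
  set S : Finset (Fin N) := Finset.image (fun b => c (.inr b)) Finset.univ with hS
  have hinj : Function.Injective (fun b : Fin (N-2) => c (.inr b)) := by
    intro a b hab
    by_contra hne
    exact c.valid (show ((SimpleGraph.cycleGraph (2*n+1)).joinG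
      (SimpleGraph.completeGraph (Fin (N - 2)))).Adj (.inr a) (.inr b) from hne) hab
  have hcardS : S.card = N - 2 := by
    rw [hS, Finset.card_image_of_injective _ hinj]
    simp
  have hcardSc : Sᶜ.card = 2 := by
    rw [Finset.card_compl, hcardS]
    simp
    omega
  have hmem : ∀ v : Fin (2*n+1), c (.inl v) ∈ Sᶜ := by
    intro v
    rw [Finset.mem_compl, hS, Finset.mem_image]
    rintro ⟨b, -, hb⟩
    exact c.valid (show ((SimpleGraph.cycleGraph (2*n+1)).joinG
      (SimpleGraph.completeGraph (Fin (N - 2)))).Adj (.inl v) (.inr b) from trivial) hb.symm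
  have : (SimpleGraph.cycleGraph (2*n+1)).Colorable 2 := by
    have hcol : (SimpleGraph.cycleGraph (2*n+1)).Coloring (Sᶜ : Finset (Fin N)) :=
      SimpleGraph.Coloring.mk (fun v => ⟨c (.inl v), hmem v⟩)
        (by
          intro u v huv hEq
          exact c.valid (show ((SimpleGraph.cycleGraph (2*n+1)).joinG
            (SimpleGraph.completeGraph (Fin (N - 2)))).Adj (.inl u) (.inl v) from huv)
            (by simpa [Subtype.ext_iff] using hEq))
    have := hcol.colorable
    rwa [Fintype.card_coe, hcardSc] at this
  exact oddCycle_not_two_colorable n hn this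

/-- For `N ≥ 3` and `n ≥ 1`, the join of the odd cycle `C_{2n+1}` with the complete
graph `K_{N-2}` is `(N+1)`-colourable but not `N`-colourable, i.e. has chromatic
number `N+1`. -/
theorem join_oddCycle_complete_chromatic (N n : ℕ) (hN : 3 ≤ N) (hn : 1 ≤ n) :
    ((SimpleGraph.cycleGraph (2 * n + 1)).joinG
        (SimpleGraph.completeGraph (Fin (N - 2)))).Colorable (N + 1) ∧
    ¬ ((SimpleGraph.cycleGraph (2 * n + 1)).joinG
        (SimpleGraph.completeGraph (Fin (N - 2)))).Colorable N :=
  ⟨join_colorable N n hN hn, join_not_colorable N n hN hn⟩
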